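/- (Entropy lower bound on regulated output; H(output) ≥ H(E) − C_channel.) Let X : Ω → D and U : Ω → R be random variables on a probability space (Ω, P) taking values in finite nonempty types D and R, and let g : D → R → O map into a finite type O with x ↦ g x u injective for every u : R. Then the output Y = (ω ↦ g (X ω) (U ω)) satisfies H(Y) ≥ H(X) − I(X : U). In particular, if the corrective information rate is bounded by a channel capacity C, i.e. I(X : U) ≤ C, then H(Y) ≥ H(X) − C. -/
import Mathlib


open MeasureTheory

/-- Shannon entropy `H(X)` of a finitely-valued random variable `X` under `P`. -/
noncomputable def entropy {Ω S : Type*} [MeasurableSpace Ω] [Fintype S]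
    (P : Measure Ω) (X : Ω → S) : ℝ :=
  ∑ s : S, Real.negMulLog (P (X ⁻¹' {s})).toReal

/-- Conditional Shannon entropy `H(X | U)` via the chain rule
`H(X | U) = H(X, U) − H(U)`. -/
noncomputable def condEntropy {Ω S T : Type*} [MeasurableSpace Ω]
    [Fintype S] [Fintype T] (P : Measure Ω) (X : Ω → S) (U : Ω → T) : ℝ :=
  entropy P (fun ω => (X ω, U ω)) - entropy P U

/-- Mutual information `I(X : U) = H(X) + H(U) − H(X, U)`. -/
noncomputable def mutualInfo {Ω S T : Type*} [MeasurableSpace Ω]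
    [Fintype S] [Fintype T] (P : Measure Ω) (X : Ω → S) (U : Ω → T) : ℝ :=
  entropy P X + entropy P U - entropy P (fun ω => (X ω, U ω))

/-- Gibbs' inequality. -/
lemma gibbs' {ι : Type*} [Fintype ι] (p q : ι → ℝ) (hp : ∀ i, 0 ≤ p i)
    (hq : ∀ i, 0 ≤ q i) (hpq : ∀ i, p i ≠ 0 → q i ≠ 0)
    (hsum : ∑ i, q i ≤ ∑ i, p i) :
    ∑ i, p i * Real.log (q i) ≤ ∑ i, p i * Real.log (p i) := by
  have key : ∀ i, p i * Real.log (q i) - p i * Real.log (p i) ≤ q i - p i := by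
    intro i
    rcases eq_or_lt_of_le (hp i) with h0 | h0
    · simpa [← h0] using hq i
    · have hq0 : 0 < q i := (hq i).lt_of_ne (Ne.symm (hpq i (ne_of_gt h0)))
      have h1 := Real.log_le_sub_one_of_pos (div_pos hq0 h0)
      rw [Real.log_div (ne_of_gt hq0) (ne_of_gt h0)] at h1
      have h2 := mul_le_mul_of_nonneg_left h1 (le_of_lt h0)
      have h3 : p i * (q i / p i - 1) = q i - p i := by field_simp
      nlinarith
  have h := Finset.sum_le_sum (s := Finset.univ) (fun i _ => key i)
  rw [Finset.sum_sub_distrib, Finset.sum_sub_distrib] at h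
  linarith

/-- Pure real-valued entropy subadditivity for a joint pmf on a product type. -/
lemma negMulLog_subadd {S T : Type*} [Fintype S] [Fintype T]
    (r : S × T → ℝ) (hr : ∀ st, 0 ≤ r st) (hsum : ∑ st, r st = 1) :
    ∑ st, Real.negMulLog (r st)
      ≤ ∑ s, Real.negMulLog (∑ t, r (s, t)) + ∑ t, Real.negMulLog (∑ s, r (s, t)) := by
  set p : S → ℝ := fun s => ∑ t, r (s, t) with hp
  set q : T → ℝ := fun t => ∑ s, r (s, t) with hq
  have hpnn : ∀ s, 0 ≤ p s := fun s => Finset.sum_nonneg fun t _ => hr _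
  have hqnn : ∀ t, 0 ≤ q t := fun t => Finset.sum_nonneg fun s _ => hr _
  have hsump : ∑ s, p s = 1 := by rw [← hsum, Fintype.sum_prod_type]
  have hsumq : ∑ t, q t = 1 := by rw [← hsum, Fintype.sum_prod_type_right]
  have hrle1 : ∀ st : S × T, r st ≤ p st.1 := fun st =>
    Finset.single_le_sum (f := fun t => r (st.1, t)) (fun t _ => hr _) (Finset.mem_univ st.2)
  have hrle2 : ∀ st : S × T, r st ≤ q st.2 := fun st =>
    Finset.single_le_sum (f := fun s => r (s, st.2)) (fun s _ => hr _) (Finset.mem_univ st.1)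
  have e1 : ∑ st : S × T, r st * Real.log (p st.1) = ∑ s, p s * Real.log (p s) := by
    rw [Fintype.sum_prod_type]
    exact Finset.sum_congr rfl fun s _ =>
      (Finset.sum_mul Finset.univ (fun t => r (s, t)) (Real.log (p s))).symm
  have e2 : ∑ st : S × T, r st * Real.log (q st.2) = ∑ t, q t * Real.log (q t) := by
    rw [Fintype.sum_prod_type_right]
    exact Finset.sum_congr rfl fun t _ =>
      (Finset.sum_mul Finset.univ (fun s => r (s, t)) (Real.log (q t))).symm
  have key : ∑ st : S × T, r st * Real.log (p st.1 * q st.2)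
      ≤ ∑ st : S × T, r st * Real.log (r st) := by
    apply gibbs' _ _ hr
    · intro st; exact mul_nonneg (hpnn _) (hqnn _)
    · intro st hst
      have h1 : 0 < p st.1 := lt_of_lt_of_le ((hr st).lt_of_ne (Ne.symm hst)) (hrle1 st)
      have h2 : 0 < q st.2 := lt_of_lt_of_le ((hr st).lt_of_ne (Ne.symm hst)) (hrle2 st)
      positivity
    · rw [show ∑ st : S × T, p st.1 * q st.2 = (∑ s, p s) * (∑ t, q t) from by
        rw [Fintype.sum_prod_type, Finset.sum_mul]
        exact Finset.sum_congr rfl fun s _ => by rw [Finset.mul_sum]]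
      rw [hsump, hsumq, hsum, one_mul]
  have hsplit : ∀ st : S × T, r st * Real.log (p st.1 * q st.2)
      = r st * Real.log (p st.1) + r st * Real.log (q st.2) := by
    intro st
    rcases eq_or_ne (r st) 0 with h | h
    · simp [h]
    · have h1 : p st.1 ≠ 0 := ne_of_gt (lt_of_lt_of_le ((hr st).lt_of_ne (Ne.symm h)) (hrle1 st))
      have h2 : q st.2 ≠ 0 := ne_of_gt (lt_of_lt_of_le ((hr st).lt_of_ne (Ne.symm h)) (hrle2 st))
      rw [Real.log_mul h1 h2]; ring
  rw [Finset.sum_congr rfl (fun st _ => hsplit st), Finset.sum_add_distrib, e1, e2] at key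
  simp only [Real.negMulLog, neg_mul]
  rw [Finset.sum_neg_distrib, Finset.sum_neg_distrib, Finset.sum_neg_distrib]
  linarith

/-- Finite partition of a set by the fibers of a finitely-valued map. -/
lemma sum_measure_partition' {Ω S : Type*} [MeasurableSpace Ω] [Fintype S]
    (P : Measure Ω) [IsFiniteMeasure P] (Y : Ω → S)
    (hY : ∀ s, MeasurableSet (Y ⁻¹' {s})) (A : Set Ω) (hA : MeasurableSet A) :
    (P A).toReal = ∑ s, (P (A ∩ Y ⁻¹' {s})).toReal := by
  have key : P A = ∑ s, P (A ∩ Y ⁻¹' {s}) := by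
    rw [← measure_biUnion_finset (f := fun s => A ∩ Y ⁻¹' {s})
      (fun s _ t _ hst => Set.disjoint_left.2 fun ω hω hω' => hst (by
        simp only [Set.mem_inter_iff, Set.mem_preimage, Set.mem_singleton_iff] at hω hω'
        rw [← hω.2, ← hω'.2]))
      (fun s _ => hA.inter (hY s))]
    congr 1
    ext ω; simp
  rw [key, ENNReal.toReal_sum (fun s _ => measure_ne_top P _)]

/-- Entropy is invariant under composition with an injective map. -/
lemma entropy_comp_inj' {Ω S T : Type*} [MeasurableSpace Ω] [Fintype S] [Fintype T]
    (P : Measure Ω) (Z : Ω → S) (f : S → T) (hf : Function.Injective f) :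
    entropy P (fun ω => f (Z ω)) = entropy P Z := by
  classical
  unfold entropy
  have hpre : ∀ t, (fun ω => f (Z ω)) ⁻¹' {t} = Z ⁻¹' (f ⁻¹' {t}) := fun t => rfl
  rw [← Finset.sum_subset (Finset.subset_univ (Finset.univ.image f))
    (fun t _ ht => by
      have h : f ⁻¹' {t} = ∅ := by
        ext s; simp only [Set.mem_preimage, Set.mem_singleton_iff, Set.mem_empty_iff_false,
          iff_false]
        intro h; exact ht (Finset.mem_image.2 ⟨s, Finset.mem_univ s, h⟩)
      simp [hpre, h])]
  rw [Finset.sum_image (fun a _ b _ h => hf h)]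
  congr 1; ext s
  have h : f ⁻¹' {f s} = {s} := by ext x; simp [hf.eq_iff]
  simp [hpre, h]

/-- Subadditivity of entropy: `H(Y, U) ≤ H(Y) + H(U)`. -/
lemma entropy_pair_le' {Ω S T : Type*} [MeasurableSpace Ω] [Fintype S] [Fintype T]
    (P : Measure Ω) [IsProbabilityMeasure P] (Y : Ω → S) (U : Ω → T)
    (hY : ∀ s, MeasurableSet (Y ⁻¹' {s})) (hU : ∀ t, MeasurableSet (U ⁻¹' {t})) :
    entropy P (fun ω => (Y ω, U ω)) ≤ entropy P Y + entropy P U := by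
  set r : S × T → ℝ := fun st => (P (Y ⁻¹' {st.1} ∩ U ⁻¹' {st.2})).toReal with hr
  have hjoint : ∀ st : S × T,
      ((fun ω => (Y ω, U ω)) ⁻¹' {st}) = Y ⁻¹' {st.1} ∩ U ⁻¹' {st.2} := by
    intro st; ext ω; simp [Prod.ext_iff]
  have hmarg1 : ∀ s, (P (Y ⁻¹' {s})).toReal = ∑ t, r (s, t) := fun s =>
    sum_measure_partition' P U hU _ (hY s)
  have hmarg2 : ∀ t, (P (U ⁻¹' {t})).toReal = ∑ s, r (s, t) := by
    intro t
    rw [sum_measure_partition' P Y hY _ (hU t)]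
    exact Finset.sum_congr rfl fun s _ => by rw [hr]; rw [Set.inter_comm]
  have hsum : ∑ st, r st = 1 := by
    rw [Fintype.sum_prod_type]
    rw [show ∑ s, ∑ t, r (s, t) = ∑ s, (P (Y ⁻¹' {s})).toReal from
      Finset.sum_congr rfl fun s _ => (hmarg1 s).symm]
    have h := sum_measure_partition' P Y hY Set.univ MeasurableSet.univ
    simp only [Set.univ_inter, measure_univ, ENNReal.toReal_one] at h
    exact h.symm
  have hmain := negMulLog_subadd r (fun st => ENNReal.toReal_nonneg) hsum
  calc entropy P (fun ω => (Y ω, U ω)) = ∑ st, Real.negMulLog (r st) := by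
        exact Finset.sum_congr rfl fun st _ => by rw [hjoint st]
    _ ≤ ∑ s, Real.negMulLog (∑ t, r (s, t)) + ∑ t, Real.negMulLog (∑ s, r (s, t)) := hmain
    _ = entropy P Y + entropy P U := by
        congr 1
        · exact Finset.sum_congr rfl fun s _ => by rw [← hmarg1 s]
        · exact Finset.sum_congr rfl fun t _ => by rw [← hmarg2 t]

/-- Entropy lower bound on the regulated output:
`H(Y) ≥ H(X) − I(X : U)`, and if `I(X : U) ≤ C` then `H(Y) ≥ H(X) − C`. -/
theorem entropy_output_ge_entropy_sub_mutualInfo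
    {Ω D R O : Type*} [MeasurableSpace Ω]
    [Fintype D] [Nonempty D] [MeasurableSpace D] [MeasurableSingletonClass D]
    [Fintype R] [Nonempty R] [MeasurableSpace R] [MeasurableSingletonClass R]
    [Fintype O]
    (P : Measure Ω) [IsProbabilityMeasure P]
    (X : Ω → D) (U : Ω → R) (hX : Measurable X) (hU : Measurable U)
    (g : D → R → O) (hg : ∀ u : R, Function.Injective (fun x => g x u)) :
    entropy P (fun ω => g (X ω) (U ω)) ≥ entropy P X - mutualInfo P X U ∧
      ∀ C : ℝ, mutualInfo P X U ≤ C →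
        entropy P (fun ω => g (X ω) (U ω)) ≥ entropy P X - C := by
  set Y : Ω → O := fun ω => g (X ω) (U ω) with hYdef
  -- measurability of the fibers of Y
  have hXU : Measurable (fun ω => (X ω, U ω)) := hX.prodMk hU
  have hYm : ∀ o : O, MeasurableSet (Y ⁻¹' {o}) := by
    intro o
    have : Y ⁻¹' {o} = (fun ω => (X ω, U ω)) ⁻¹' {p : D × R | g p.1 p.2 = o} := by
      ext ω; simp [hYdef]
    rw [this]
    exact hXU ((Set.to_countable _).measurableSet)
  have hUm : ∀ u : R, MeasurableSet (U ⁻¹' {u}) := fun u => hU (measurableSet_singleton u)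
  -- H(Y, U) = H(X, U) via the injective map (x, u) ↦ (g x u, u)
  have hf : Function.Injective (fun p : D × R => (g p.1 p.2, p.2)) := by
    rintro ⟨x, u⟩ ⟨x', u'⟩ h
    simp only [Prod.mk.injEq] at h
    obtain ⟨h1, h2⟩ := h
    subst h2
    exact Prod.ext (hg u h1) rfl
  have hpair : entropy P (fun ω => (Y ω, U ω)) = entropy P (fun ω => (X ω, U ω)) :=
    entropy_comp_inj' P (fun ω => (X ω, U ω)) (fun p : D × R => (g p.1 p.2, p.2)) hf
  -- subadditivity
  have hsub : entropy P (fun ω => (Y ω, U ω)) ≤ entropy P Y + entropy P U :=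
    entropy_pair_le' P Y U hYm hUm
  have hmain : entropy P Y ≥ entropy P X - mutualInfo P X U := by
    unfold mutualInfo
    rw [← hpair] at *
    linarith
  exact ⟨hmain, fun C hC => by linarith⟩
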